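/- arXiv:1703.10148 — 2 statements merged into one kernel-verified Lean document; each statement's English description precedes it below -/
import Mathlib

section
/- If forcings P and Q are sub-equivalent (P ≂ Q), then they are equivalent (P ≃ Q). -/
universe u v

/-- A subset `D` of a forcing (preorder) is dense if every condition has an extension in `D`. -/
def DenseSub {P : Type u} [Preorder P] (D : Set P) : Prop :=
  ∀ p : P, ∃ d ∈ D, d ≤ p

/-- A sub-isomorphism `ι : P → Q` is an order isomorphism of `P` onto a dense subset of `Q`:
it is injective, satisfies `p ≤ p' ↔ ι p ≤ ι p'`, and its range is dense in `Q`. -/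
structure IsSubIso {P : Type u} {Q : Type v} [Preorder P] [Preorder Q] (ι : P → Q) : Prop where
  inj : Function.Injective ι
  le_iff : ∀ p p' : P, p ≤ p' ↔ ι p ≤ ι p'
  dense : DenseSub (Set.range ι)

/-- `P` and `Q` are sub-equivalent if there are a forcing `R` and sub-isomorphisms
`R → P` and `R → Q`. -/
def SubEquiv (P Q : Type u) [Preorder P] [Preorder Q] : Prop :=
  ∃ (R : Type u) (instR : Preorder R) (f : R → P) (g : R → Q),
    @IsSubIso R P instR _ f ∧ @IsSubIso R Q instR _ g

/-- `P` and `Q` are equivalent if there are a forcing `S` and sub-isomorphisms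
`P → S` and `Q → S`. -/
def EquivForcing (P Q : Type u) [Preorder P] [Preorder Q] : Prop :=
  ∃ (S : Type u) (instS : Preorder S) (f : P → S) (g : Q → S),
    @IsSubIso P S _ instS f ∧ @IsSubIso Q S _ instS g

section Amalg
variable {P Q R : Type u} [Preorder P] [Preorder Q] [Preorder R] (f : R → P) (g : R → Q)

/-- The glued order on `P ⊕ Q`, identifying the images of `R`. -/
def amalgLE : P ⊕ Q → P ⊕ Q → Prop
  | .inl p, .inl p' => p ≤ p'
  | .inl p, .inr q => ∃ r, p ≤ f r ∧ g r ≤ q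
  | .inr q, .inl p => ∃ r, q ≤ g r ∧ f r ≤ p
  | .inr q, .inr q' => q ≤ q'

def Amalg (P Q : Type u) : Type u := P ⊕ Q

def amalgPreorder (hf : IsSubIso f) (hg : IsSubIso g) : Preorder (Amalg P Q) where
  le := amalgLE f g
  lt a b := amalgLE f g a b ∧ ¬ amalgLE f g b a
  lt_iff_le_not_ge _ _ := Iff.rfl
  le_refl x := by cases x <;> simp [amalgLE]
  le_trans x y z hxy hyz := by
    cases x <;> cases y <;> cases z <;> simp only [amalgLE] at hxy hyz ⊢
    · exact le_trans hxy hyz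
    · obtain ⟨r, h1, h2⟩ := hyz; exact ⟨r, le_trans hxy h1, h2⟩
    · obtain ⟨r, h1, h2⟩ := hxy; obtain ⟨r', h3, h4⟩ := hyz
      exact le_trans h1 (le_trans ((hf.le_iff r r').mp ((hg.le_iff r r').mpr (le_trans h2 h3))) h4)
    · obtain ⟨r, h1, h2⟩ := hxy; exact ⟨r, h1, le_trans h2 hyz⟩
    · obtain ⟨r, h1, h2⟩ := hxy; exact ⟨r, h1, le_trans h2 hyz⟩
    · obtain ⟨r, h1, h2⟩ := hxy; obtain ⟨r', h3, h4⟩ := hyz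
      exact le_trans h1 (le_trans ((hg.le_iff r r').mp ((hf.le_iff r r').mpr (le_trans h2 h3))) h4)
    · obtain ⟨r, h1, h2⟩ := hyz; exact ⟨r, le_trans hxy h1, h2⟩
    · exact le_trans hxy hyz

end Amalg

/-- If the forcings `P` and `Q` are sub-equivalent, then they are equivalent. -/
theorem statement1 {P Q : Type u} [Preorder P] [Preorder Q] (h : SubEquiv P Q) :
    EquivForcing P Q := by
  obtain ⟨R, instR, f, g, hf, hg⟩ := h
  letI : Preorder (Amalg P Q) := amalgPreorder f g hf hg
  refine ⟨Amalg P Q, inferInstance, Sum.inl, Sum.inr, ?_, ?_⟩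
  · refine ⟨fun a b hab => Sum.inl.inj hab, fun p p' => Iff.rfl, fun s => ?_⟩
    cases s with
    | inl p => exact ⟨Sum.inl p, ⟨p, rfl⟩, le_refl p⟩
    | inr q =>
      obtain ⟨_, ⟨r, rfl⟩, hr⟩ := hg.dense q
      exact ⟨Sum.inl (f r), ⟨f r, rfl⟩, ⟨r, le_refl _, hr⟩⟩
  · refine ⟨fun a b hab => Sum.inr.inj hab, fun q q' => Iff.rfl, fun s => ?_⟩
    cases s with
    | inl p =>
      obtain ⟨_, ⟨r, rfl⟩, hr⟩ := hf.dense p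
      exact ⟨Sum.inr (g r), ⟨g r, rfl⟩, ⟨r, le_refl _, hr⟩⟩
    | inr q => exact ⟨Sum.inr q, ⟨q, rfl⟩, le_refl q⟩
end

section
/- Let ν be an infinite regular cardinal with ν^{<ν} = ν and let t ∈ ν^{<ν}. A subset A of ν^ν is ν-comeager in N_t if and only if there is a dense continuous homomorphism f : ν^{<ν} → ν^{<ν} with f(∅) = t and ran(f*) ⊆ A. -/
universe u

noncomputable section

/-! ## Sequences of ordinals

`SeqLT o v` is the set `v^{<o}` of all sequences of ordinals `< v` of length `< o`
(for `o > 0`; values beyond the length are normalized to `0`).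
`SeqFull o v` is the generalized Baire space `v^o` of all functions from ordinals `< o`
to ordinals `< v`. -/

/-- An element of `v^{<o}`: a sequence of ordinals `< v` of length `< o`. -/
structure SeqLT (o v : Ordinal.{u}) : Type (u + 1) where
  len : Ordinal.{u}
  len_lt : len < o ⊔ 1
  val : Ordinal.{u} → Ordinal.{u}
  val_lt : ∀ β, β < len → val β < v
  val_zero : ∀ β, len ≤ β → val β = 0

namespace SeqLT

variable {o v : Ordinal.{u}}

/-- `s ⊆ t`, i.e. `t` end-extends `s`. -/
protected def le (s t : SeqLT o v) : Prop :=
  s.len ≤ t.len ∧ ∀ β, β < s.len → s.val β = t.val β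

/-- `s ⊊ t`, i.e. `t` properly end-extends `s`. -/
protected def slt (s t : SeqLT o v) : Prop :=
  s.le t ∧ s.len < t.len

/-- The empty sequence. -/
protected def empty (o v : Ordinal.{u}) : SeqLT o v where
  len := 0
  len_lt := lt_sup_iff.mpr (Or.inr zero_lt_one)
  val := fun _ => 0
  val_lt := fun β h => absurd h (zero_le : (0 : Ordinal) ≤ β).not_gt
  val_zero := fun _ _ => rfl

/-- `s⌢⟨β⟩`: the sequence `s` extended by the single value `β`. -/
def snoc (s : SeqLT o v) (β : Ordinal.{u}) : SeqLT o v :=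
  if h : s.len + 1 < o ⊔ 1 ∧ β < v then
    { len := s.len + 1
      len_lt := h.1
      val := fun γ => if γ = s.len then β else s.val γ
      val_lt := fun γ hγ => by
        rcases eq_or_ne γ s.len with rfl | hne
        · simpa using h.2
        · simp only [if_neg hne]
          refine s.val_lt γ (lt_of_le_of_ne ?_ hne)
          rw [Ordinal.add_one_eq_succ] at hγ
          exact Order.lt_succ_iff.mp hγ
      val_zero := fun γ hγ => by
        have h1 : s.len < γ :=
          lt_of_lt_of_le (by rw [Ordinal.add_one_eq_succ]; exact Order.lt_succ s.len) hγ
        simp only [if_neg h1.ne']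
        exact s.val_zero γ h1.le }
  else s

protected theorem le_refl (s : SeqLT o v) : s.le s :=
  ⟨le_rfl, fun _ _ => rfl⟩

protected theorem le_trans {s t u : SeqLT o v} (h1 : s.le t) (h2 : t.le u) : s.le u :=
  ⟨h1.1.trans h2.1, fun β hβ => (h1.2 β hβ).trans (h2.2 β (lt_of_lt_of_le hβ h1.1))⟩

end SeqLT

/-- An element of the generalized Baire space `v^o`. -/
structure SeqFull (o v : Ordinal.{u}) : Type (u + 1) where
  val : Ordinal.{u} → Ordinal.{u}
  val_lt : ∀ β, β < o → val β < v
  val_zero : ∀ β, o ≤ β → val β = 0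

/-- The restriction `x ↾ β` of `x : v^o` to an ordinal `β < o`. -/
def SeqFull.res {o v : Ordinal.{u}} (x : SeqFull o v) (β : Ordinal.{u}) : SeqLT o v :=
  if h : β < o ⊔ 1 then
    { len := β
      len_lt := h
      val := fun γ => if γ < β then x.val γ else 0
      val_lt := fun γ hγ => by
        simp only [if_pos hγ]
        rcases lt_sup_iff.mp h with h' | h'
        · exact x.val_lt γ (hγ.trans h')
        · rw [Ordinal.lt_one_iff_zero] at h'
          exact absurd (h' ▸ hγ) (zero_le : (0 : Ordinal) ≤ γ).not_gt
      val_zero := fun γ hγ => if_neg (not_lt.mpr hγ) }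
  else SeqLT.empty o v

/-- `s ⊆ x`: the sequence `s` is an initial segment of `x : v^o`. -/
def SeqLT.prefixOf {o v : Ordinal.{u}} (s : SeqLT o v) (x : SeqFull o v) : Prop :=
  ∀ β, β < s.len → s.val β = x.val β

/-! ## The bounded topology -/

/-- The basic open set `N_t`. -/
def basicOpen {o v : Ordinal.{u}} (t : SeqLT o v) : Set (SeqFull o v) :=
  {x | t.prefixOf x}

/-- The bounded (standard) topology on the generalized Baire space, generated by the
basic open sets `N_t`. -/
instance (o v : Ordinal.{u}) : TopologicalSpace (SeqFull o v) :=
  TopologicalSpace.generateFrom {U | ∃ t : SeqLT o v, U = basicOpen t}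

/-- `A` is a nowhere dense subset of `B` (in the subspace topology on `B`). -/
def NowhereDenseIn {o v : Ordinal.{u}} (A B : Set (SeqFull o v)) : Prop :=
  A ⊆ B ∧ interior (closure {x : ↥B | (x : SeqFull o v) ∈ A}) = ∅

/-- `A` is `o`-meager in `B`: `A ∩ B` is the union of (card of) `o` many nowhere dense
subsets of `B`. -/
def MeagerIn {o v : Ordinal.{u}} (A B : Set (SeqFull o v)) : Prop :=
  ∃ F : {β : Ordinal.{u} // β < o} → Set (SeqFull o v),
    (∀ i, NowhereDenseIn (F i) B) ∧ A ∩ B = ⋃ i, F i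

/-- `A` is comeager in `B`: `B \ A` is meager in `B`. -/
def ComeagerIn {o v : Ordinal.{u}} (A B : Set (SeqFull o v)) : Prop :=
  MeagerIn (B \ A) B

/-- `A` has the `o`-Baire property: for some open `U`, `A △ U` is meager. -/
def BaireSet {o v : Ordinal.{u}} (A : Set (SeqFull o v)) : Prop :=
  ∃ U : Set (SeqFull o v), IsOpen U ∧ MeagerIn (symmDiff A U) Set.univ

/-! ## Homomorphisms of `v^{<o}` -/

/-- A homomorphism: strictly extension-preserving map of `v^{<o}` to itself. -/
def IsHom {o v : Ordinal.{u}} (f : SeqLT o v → SeqLT o v) : Prop :=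
  ∀ s t : SeqLT o v, s.slt t → (f s).slt (f t)

/-- `f` is dense: for every `s` and every `t ⊇ f(s)` there is `β < v` with
`f(s⌢⟨β⟩) ⊇ t`. -/
def IsDenseMap {o v : Ordinal.{u}} (f : SeqLT o v → SeqLT o v) : Prop :=
  ∀ s t : SeqLT o v, (f s).le t → ∃ β, β < v ∧ t.le (f (s.snoc β))

/-- `u = ⋃_{α<γ} s α` for a chain `s`. -/
def IsUnionOfChain {o v : Ordinal.{u}} (u : SeqLT o v) (γ : Ordinal.{u})
    (s : Ordinal.{u} → SeqLT o v) : Prop :=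
  (∀ α, α < γ → (s α).le u) ∧ ∀ β, β < u.len → ∃ α, α < γ ∧ β < (s α).len

/-- `f` is continuous: for every limit `γ < o` and every strictly increasing sequence
`⟨s_α : α < γ⟩`, `f(⋃_{α<γ} s_α) = ⋃_{α<γ} f(s_α)`. -/
def IsContinuousMap {o v : Ordinal.{u}} (f : SeqLT o v → SeqLT o v) : Prop :=
  ∀ γ : Ordinal.{u}, Order.IsSuccLimit γ → γ < o →
    ∀ s : Ordinal.{u} → SeqLT o v, (∀ α β, α < β → β < γ → (s α).slt (s β)) →
      ∀ u : SeqLT o v, IsUnionOfChain u γ s → IsUnionOfChain (f u) γ fun α => f (s α)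

/-- `y = f*(x) = ⋃_{α<o} f(x↾α)` for a homomorphism `f`. -/
def FStarVal {o v : Ordinal.{u}} (f : SeqLT o v → SeqLT o v) (x y : SeqFull o v) : Prop :=
  (∀ α, α < o → (f (x.res α)).prefixOf y) ∧
    ∀ β, β < o → ∃ α, α < o ∧ β < (f (x.res α)).len

/-! ## Clubs and the almost Baire property -/

/-- `C` is a club (closed unbounded set) in the ordinal `o`. -/
def IsClubIn (C : Set Ordinal.{u}) (o : Ordinal.{u}) : Prop :=
  (∀ γ ∈ C, γ < o) ∧ (∀ β, β < o → ∃ γ ∈ C, β ≤ γ) ∧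
    ∀ β, β < o → 0 < β → (∀ γ, γ < β → ∃ ξ ∈ C, γ < ξ ∧ ξ < β) → β ∈ C

/-- The set of functions coding elements of the club filter as characteristic functions. -/
def ClSet (o v : Ordinal.{u}) : Set (SeqFull o v) :=
  {x | ∃ C : Set Ordinal.{u}, IsClubIn C o ∧ ∀ i ∈ C, x.val i ≠ 0}

/-- The set of functions coding elements of the nonstationary ideal. -/
def NsSet (o v : Ordinal.{u}) : Set (SeqFull o v) :=
  {x | ∃ C : Set Ordinal.{u}, IsClubIn C o ∧ ∀ i ∈ C, x.val i = 0}

/-- `A` is almost Baire: there is a dense homomorphism `f` with `ran f* ⊆ A`, or a dense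
continuous homomorphism `f` with `f ∅ = ∅` and `ran f* ⊆ Aᶜ`. -/
def AlmostBaire {o v : Ordinal.{u}} (A : Set (SeqFull o v)) : Prop :=
  ∃ f : SeqLT o v → SeqLT o v, IsHom f ∧ IsDenseMap f ∧
    ((∀ x y, FStarVal f x y → y ∈ A) ∨
      ((∀ x y, FStarVal f x y → y ∉ A) ∧ IsContinuousMap f ∧
        f (SeqLT.empty o v) = SeqLT.empty o v))

/-! ## Banach–Mazur games of length `o`

A run of the game is a strictly increasing sequence `⟨s_α : α < o⟩` in `v^{<o}`;
player I plays at even positions (`0` and limits count as even), player II at odd ones.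
In the game `G^t` the first move of player I must extend `t`; taking `t = ∅` gives the
plain Banach–Mazur game. -/

/-- `γ` is an even ordinal (`0` and limits are even). -/
def EvenOrd (γ : Ordinal.{u}) : Prop := ∃ δ : Ordinal.{u}, γ = 2 * δ

/-- `γ` is an odd ordinal. -/
def OddOrd (γ : Ordinal.{u}) : Prop := ∃ δ : Ordinal.{u}, γ = 2 * δ + 1

/-- The moves of a (partial) run, as a function on ordinals. -/
abbrev Play (o v : Ordinal.{u}) := Ordinal.{u} → SeqLT o v

/-- A strategy: given the length of the current position and the moves so far,
produce the next move. -/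
abbrev Strat (o v : Ordinal.{u}) := Ordinal.{u} → Play o v → SeqLT o v

/-- `p` is a legal partial run of length `γ` of the game `G^t`: strictly increasing moves,
the first move extends `t`, and the moves beyond `γ` are normalized to `∅`. -/
def IsPos {o v : Ordinal.{u}} (t : SeqLT o v) (p : Play o v) (γ : Ordinal.{u}) : Prop :=
  (∀ α β, α < β → β < γ → (p α).slt (p β)) ∧ (0 < γ → t.le (p 0)) ∧
    ∀ α, γ ≤ α → p α = SeqLT.empty o v

/-- The restriction of a run to its first `γ` moves. -/
def resPlay {o v : Ordinal.{u}} (p : Play o v) (γ : Ordinal.{u}) : Play o v :=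
  fun α => if α < γ then p α else SeqLT.empty o v

/-- `m` is a legal move at the position `p` of length `γ` in the game `G^t`. -/
def MoveOK {o v : Ordinal.{u}} (t : SeqLT o v) (p : Play o v) (γ : Ordinal.{u})
    (m : SeqLT o v) : Prop :=
  (∀ α, α < γ → (p α).slt m) ∧ (γ = 0 → t.le m)

/-- `σ` is a strategy for player I in `G^t`: it assigns a legal move to every legal
position of even length. -/
def LegalI {o v : Ordinal.{u}} (t : SeqLT o v) (σ : Strat o v) : Prop :=
  ∀ γ, γ < o → EvenOrd γ → ∀ p, IsPos t p γ → MoveOK t p γ (σ γ p)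

/-- `σ` is a strategy for player II in `G^t`: it assigns a legal move to every legal
position of odd length. -/
def LegalII {o v : Ordinal.{u}} (t : SeqLT o v) (σ : Strat o v) : Prop :=
  ∀ γ, γ < o → OddOrd γ → ∀ p, IsPos t p γ → MoveOK t p γ (σ γ p)

/-- The first `γ` moves of `p` follow the strategy `σ` of player I. -/
def FollowsI {o v : Ordinal.{u}} (σ : Strat o v) (p : Play o v) (γ : Ordinal.{u}) : Prop :=
  ∀ α, α < γ → EvenOrd α → p α = σ α (resPlay p α)

/-- The first `γ` moves of `p` follow the strategy `σ` of player II. -/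
def FollowsII {o v : Ordinal.{u}} (σ : Strat o v) (p : Play o v) (γ : Ordinal.{u}) : Prop :=
  ∀ α, α < γ → OddOrd α → p α = σ α (resPlay p α)

/-- `x = ⋃_{α<o} p α` is the outcome of the complete run `p`. -/
def IsOutcome {o v : Ordinal.{u}} (p : Play o v) (x : SeqFull o v) : Prop :=
  (∀ α, α < o → (p α).prefixOf x) ∧ ∀ β, β < o → ∃ α, α < o ∧ β < (p α).len

/-- Player I has a winning strategy in the Banach–Mazur game `G^t(A)` of length `o`. -/
def WinIStrat {o v : Ordinal.{u}} (t : SeqLT o v) (A : Set (SeqFull o v)) : Prop :=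
  ∃ σ : Strat o v, LegalI t σ ∧
    ∀ p : Play o v, IsPos t p o → FollowsI σ p o → ∃ x, IsOutcome p x ∧ x ∈ A

/-- Player II has a winning strategy in the Banach–Mazur game `G^t(A)` of length `o`. -/
def WinIIStrat {o v : Ordinal.{u}} (t : SeqLT o v) (A : Set (SeqFull o v)) : Prop :=
  ∃ σ : Strat o v, LegalII t σ ∧
    ∀ p : Play o v, IsPos t p o → FollowsII σ p o → ∃ x, IsOutcome p x ∧ x ∉ A

/-- `σ` is a tactic for player II: its moves depend only on the union of the previous moves. -/
def IsTacticII {o v : Ordinal.{u}} (t : SeqLT o v) (σ : Strat o v) : Prop :=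
  ∃ f : SeqLT o v → SeqLT o v, ∀ γ, γ < o → OddOrd γ → ∀ p, IsPos t p γ →
    ∀ u, IsUnionOfChain u γ p → σ γ p = f u

/-- Player II has a winning tactic in the Banach–Mazur game `G^t(A)` of length `o`. -/
def WinIITactic {o v : Ordinal.{u}} (t : SeqLT o v) (A : Set (SeqFull o v)) : Prop :=
  ∃ σ : Strat o v, LegalII t σ ∧ IsTacticII t σ ∧
    ∀ p : Play o v, IsPos t p o → FollowsII σ p o → ∃ x, IsOutcome p x ∧ x ∉ A

/-! ## Trees and perfect sets -/

/-- A subtree of `v^{<o}`: a downwards closed set of sequences. -/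
def IsSubtree {o v : Ordinal.{u}} (T : Set (SeqLT o v)) : Prop :=
  ∀ s ∈ T, ∀ r : SeqLT o v, r.le s → r ∈ T

/-- `T` is closed: every strictly increasing sequence in `T` of length `< o` has an
upper bound in `T`. -/
def TreeClosed {o v : Ordinal.{u}} (T : Set (SeqLT o v)) : Prop :=
  ∀ γ : Ordinal.{u}, γ < o → ∀ s : Ordinal.{u} → SeqLT o v,
    (∀ α β, α < β → β < γ → (s α).slt (s β)) → (∀ α, α < γ → s α ∈ T) →
      ∃ b ∈ T, ∀ α, α < γ → (s α).le b

/-- `t` is a direct successor of `s`. -/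
def IsDirectSucc {o v : Ordinal.{u}} (s t : SeqLT o v) : Prop :=
  s.slt t ∧ t.len = s.len + 1

/-- `T` is a perfect tree: a (nonempty) closed subtree whose splitting nodes are cofinal. -/
def IsPerfectTree {o v : Ordinal.{u}} (T : Set (SeqLT o v)) : Prop :=
  T.Nonempty ∧ IsSubtree T ∧ TreeClosed T ∧
    ∀ s ∈ T, ∃ t ∈ T, s.le t ∧
      ∃ t₁ ∈ T, ∃ t₂ ∈ T, IsDirectSucc t t₁ ∧ IsDirectSucc t t₂ ∧ t₁ ≠ t₂

/-- The body `[T]` of a tree `T`: the set of branches of length `o` through `T`. -/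
def treeBody {o v : Ordinal.{u}} (T : Set (SeqLT o v)) : Set (SeqFull o v) :=
  {x | ∀ α, α < o → x.res α ∈ T}

/-! ## Auxiliary infrastructure -/

namespace SeqLT

variable {o v : Ordinal.{u}}

theorem ext' {s t : SeqLT o v} (h1 : s.len = t.len)
    (h2 : ∀ β, β < s.len → s.val β = t.val β) : s = t := by
  cases s with | mk l hl f hf hf0 =>
  cases t with | mk l' hl' f' hf' hf0' =>
  simp only at h1 h2
  subst h1
  simp only [mk.injEq, true_and]
  funext β
  by_cases hβ : β < l
  · exact h2 β hβ
  · rw [hf0 β (not_lt.1 hβ), hf0' β (not_lt.1 hβ)]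

protected theorem le_antisymm {s t : SeqLT o v} (h1 : s.le t) (h2 : t.le s) : s = t :=
  ext' (le_antisymm h1.1 h2.1) h1.2

theorem le_slt_trans {s t u : SeqLT o v} (h1 : s.le t) (h2 : t.slt u) : s.slt u :=
  ⟨SeqLT.le_trans h1 h2.1, lt_of_le_of_lt h1.1 h2.2⟩

theorem slt_le_trans {s t u : SeqLT o v} (h1 : s.slt t) (h2 : t.le u) : s.slt u :=
  ⟨SeqLT.le_trans h1.1 h2, lt_of_lt_of_le h1.2 h2.1⟩

protected theorem slt_trans {s t u : SeqLT o v} (h1 : s.slt t) (h2 : t.slt u) : s.slt u :=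
  ⟨SeqLT.le_trans h1.1 h2.1, h1.2.trans h2.2⟩

theorem empty_le (s : SeqLT o v) : (SeqLT.empty o v).le s :=
  ⟨zero_le, fun β hβ => absurd hβ ((zero_le : (0 : Ordinal) ≤ β).not_gt)⟩

theorem empty_len : (SeqLT.empty o v).len = 0 := rfl

theorem eq_empty_of_len_eq_zero {s : SeqLT o v} (h : s.len = 0) : s = SeqLT.empty o v :=
  ext' h (fun β hβ => absurd (h ▸ hβ) ((zero_le : (0 : Ordinal) ≤ β).not_gt))

theorem prefixOf_of_le {s t : SeqLT o v} {x : SeqFull o v} (h1 : s.le t)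
    (h2 : t.prefixOf x) : s.prefixOf x :=
  fun β hβ => (h1.2 β hβ).trans (h2 β (lt_of_lt_of_le hβ h1.1))

theorem comparable_of_prefixOf {s t : SeqLT o v} {x : SeqFull o v} (h1 : s.prefixOf x)
    (h2 : t.prefixOf x) : s.le t ∨ t.le s := by
  rcases le_total s.len t.len with h | h
  · exact Or.inl ⟨h, fun β hβ => (h1 β hβ).trans (h2 β (lt_of_lt_of_le hβ h)).symm⟩
  · exact Or.inr ⟨h, fun β hβ => (h2 β hβ).trans (h1 β (lt_of_lt_of_le hβ h)).symm⟩

/-- Extend a sequence to a point of the full space by zeros. -/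
def toFull (hoo : o ⊔ 1 = o) (hv : 0 < v) (s : SeqLT o v) : SeqFull o v where
  val := fun β => if β < s.len then s.val β else 0
  val_lt := fun β _ => by
    split_ifs with h
    · exact s.val_lt β h
    · exact hv
  val_zero := fun β hβ => by
    rw [if_neg (not_lt.2 ((hoo ▸ s.len_lt).le.trans hβ))]

theorem prefixOf_toFull (hoo : o ⊔ 1 = o) (hv : 0 < v) (s : SeqLT o v) :
    s.prefixOf (s.toFull hoo hv) := fun β hβ => by
  show s.val β = if β < s.len then s.val β else 0
  rw [if_pos hβ]

end SeqLT

namespace SeqFull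

variable {o v : Ordinal.{u}}

theorem res_len {x : SeqFull o v} {β : Ordinal.{u}} (h : β < o ⊔ 1) : (x.res β).len = β := by
  rw [SeqFull.res, dif_pos h]

theorem res_val {x : SeqFull o v} {β γ : Ordinal.{u}} (h : β < o ⊔ 1) (hγ : γ < β) :
    (x.res β).val γ = x.val γ := by
  rw [SeqFull.res, dif_pos h]; exact if_pos hγ

theorem res_prefixOf {x : SeqFull o v} {β : Ordinal.{u}} (h : β < o ⊔ 1) :
    (x.res β).prefixOf x := fun γ hγ => res_val h (by rwa [res_len h] at hγ)

theorem prefixOf_iff_res {s : SeqLT o v} {x : SeqFull o v} :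
    s.prefixOf x ↔ x.res s.len = s := by
  constructor
  · intro h
    refine SeqLT.ext' (res_len s.len_lt) (fun β hβ => ?_)
    rw [res_len s.len_lt] at hβ
    rw [res_val s.len_lt hβ, h β hβ]
  · intro h
    rw [← h]
    exact res_prefixOf s.len_lt

theorem res_zero (x : SeqFull o v) : x.res 0 = SeqLT.empty o v := by
  apply SeqLT.eq_empty_of_len_eq_zero
  exact res_len (lt_sup_iff.2 (Or.inr zero_lt_one))

theorem res_le_res {x : SeqFull o v} {β γ : Ordinal.{u}} (hβγ : β ≤ γ) (h : γ < o ⊔ 1) :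
    (x.res β).le (x.res γ) := by
  have hβ : β < o ⊔ 1 := lt_of_le_of_lt hβγ h
  refine ⟨by rw [res_len hβ, res_len h]; exact hβγ, fun δ hδ => ?_⟩
  rw [res_len hβ] at hδ
  rw [res_val hβ hδ, res_val h (lt_of_lt_of_le hδ hβγ)]

theorem ext' {x y : SeqFull o v} (h : ∀ β, β < o → x.val β = y.val β) : x = y := by
  cases x with | mk f hf hf0 =>
  cases y with | mk f' hf' hf0' =>
  simp only at h
  simp only [mk.injEq]
  funext β
  by_cases hβ : β < o
  · exact h β hβ
  · rw [hf0 β (not_lt.1 hβ), hf0' β (not_lt.1 hβ)]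

end SeqFull

section Snoc

variable {o v : Ordinal.{u}}

theorem snoc_len {s : SeqLT o v} {β : Ordinal.{u}} (h1 : s.len + 1 < o ⊔ 1) (h2 : β < v) :
    (s.snoc β).len = s.len + 1 := by
  rw [SeqLT.snoc, dif_pos ⟨h1, h2⟩]

theorem snoc_val_last {s : SeqLT o v} {β : Ordinal.{u}} (h1 : s.len + 1 < o ⊔ 1) (h2 : β < v) :
    (s.snoc β).val s.len = β := by
  rw [SeqLT.snoc, dif_pos ⟨h1, h2⟩]; exact if_pos rfl

theorem snoc_val_of_lt {s : SeqLT o v} {β γ : Ordinal.{u}} (h1 : s.len + 1 < o ⊔ 1)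
    (h2 : β < v) (hγ : γ < s.len) : (s.snoc β).val γ = s.val γ := by
  rw [SeqLT.snoc, dif_pos ⟨h1, h2⟩]; exact if_neg hγ.ne

theorem le_snoc {s : SeqLT o v} {β : Ordinal.{u}} (h1 : s.len + 1 < o ⊔ 1) (h2 : β < v) :
    s.le (s.snoc β) :=
  ⟨by rw [snoc_len h1 h2]; exact le_self_add,
    fun γ hγ => (snoc_val_of_lt h1 h2 hγ).symm⟩

theorem slt_snoc {s : SeqLT o v} {β : Ordinal.{u}} (h1 : s.len + 1 < o ⊔ 1) (h2 : β < v) :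
    s.slt (s.snoc β) :=
  ⟨le_snoc h1 h2, by
    rw [snoc_len h1 h2, Ordinal.add_one_eq_succ]; exact Order.lt_succ s.len⟩

end Snoc

section Topology

variable {o v : Ordinal.{u}}

theorem basicOpen_mono {s r : SeqLT o v} (h : s.le r) : basicOpen r ⊆ basicOpen s :=
  fun _ hx => SeqLT.prefixOf_of_le h hx

theorem basicOpen_empty : basicOpen (SeqLT.empty o v) = Set.univ := by
  ext x
  simp only [Set.mem_univ, iff_true, basicOpen, Set.mem_setOf_eq]
  exact fun β hβ => absurd hβ ((zero_le : (0 : Ordinal) ≤ β).not_gt)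

theorem exists_longer {a b : SeqLT o v} {x : SeqFull o v} (ha : x ∈ basicOpen a)
    (hb : x ∈ basicOpen b) :
    ∃ c : SeqLT o v, a.le c ∧ b.le c ∧ x ∈ basicOpen c ∧
      basicOpen c ⊆ basicOpen a ∩ basicOpen b := by
  rcases SeqLT.comparable_of_prefixOf ha hb with h | h
  · exact ⟨b, h, SeqLT.le_refl b, hb,
      fun z hz => ⟨basicOpen_mono h hz, hz⟩⟩
  · exact ⟨a, SeqLT.le_refl a, h, ha,
      fun z hz => ⟨hz, basicOpen_mono h hz⟩⟩

theorem isBasis :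
    TopologicalSpace.IsTopologicalBasis {U : Set (SeqFull o v) | ∃ t : SeqLT o v, U = basicOpen t} where
  exists_subset_inter := by
    rintro _ ⟨a, rfl⟩ _ ⟨b, rfl⟩ x ⟨ha, hb⟩
    obtain ⟨c, _, _, hc, hsub⟩ := exists_longer ha hb
    exact ⟨basicOpen c, ⟨c, rfl⟩, hc, hsub⟩
  sUnion_eq := by
    refine Set.eq_univ_of_forall (fun x => ?_)
    exact ⟨basicOpen (SeqLT.empty o v), ⟨_, rfl⟩, by rw [basicOpen_empty]; trivial⟩
  eq_generateFrom := rfl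

theorem isOpen_basicOpen {s : SeqLT o v} : IsOpen (basicOpen s) :=
  isBasis.isOpen ⟨s, rfl⟩

theorem eq_of_prefixOf_len_eq {s r : SeqLT o v} {x : SeqFull o v} (hs : s.prefixOf x)
    (hr : r.prefixOf x) (h : s.len = r.len) : s = r := by
  rcases SeqLT.comparable_of_prefixOf hs hr with h' | h'
  · exact SeqLT.ext' h h'.2
  · exact (SeqLT.ext' h.symm h'.2).symm

theorem isClosed_basicOpen {s : SeqLT o v} : IsClosed (basicOpen s) := by
  rw [← isOpen_compl_iff]
  rw [isBasis.isOpen_iff]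
  intro x hx
  refine ⟨basicOpen (x.res s.len), ⟨_, rfl⟩, SeqFull.res_prefixOf s.len_lt, fun z hz hzs => ?_⟩
  have : s = x.res s.len := by
    refine eq_of_prefixOf_len_eq (x := z) hzs hz (SeqFull.res_len s.len_lt).symm
  exact hx (this ▸ SeqFull.res_prefixOf s.len_lt : s.prefixOf x)

theorem basicOpen_nonempty (hoo : o ⊔ 1 = o) (hv : 0 < v) (s : SeqLT o v) :
    (basicOpen s).Nonempty :=
  ⟨s.toFull hoo hv, SeqLT.prefixOf_toFull hoo hv s⟩

/-- The combinatorial characterization of being nowhere dense in a basic open set. -/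
theorem nowhereDenseIn_iff (hoo : o ⊔ 1 = o) (hv : 0 < v) {t : SeqLT o v}
    {F : Set (SeqFull o v)} (hFB : F ⊆ basicOpen t) :
    NowhereDenseIn F (basicOpen t) ↔
      ∀ s : SeqLT o v, t.le s → ∃ s', s.le s' ∧ basicOpen s' ∩ F = ∅ := by
  set B := basicOpen t with hB
  set S : Set ↥B := {x : ↥B | (x : SeqFull o v) ∈ F} with hS
  constructor
  · rintro ⟨-, hint⟩ s hts
    set Sh : Set ↥B := Subtype.val ⁻¹' basicOpen s with hSh
    have hShopen : IsOpen Sh := isOpen_basicOpen.preimage continuous_subtype_val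
    have hShne : Sh.Nonempty := by
      refine ⟨⟨s.toFull hoo hv, ?_⟩, ?_⟩
      · exact SeqLT.prefixOf_of_le hts (SeqLT.prefixOf_toFull hoo hv s)
      · exact SeqLT.prefixOf_toFull hoo hv s
    have hnotsub : ¬ Sh ⊆ closure S := by
      intro hsub
      have := (hShopen.subset_interior_iff.2 hsub)
      rw [hint] at this
      exact hShne.not_subset_empty this
    obtain ⟨z, hzSh, hznc⟩ := Set.not_subset.1 hnotsub
    rw [mem_closure_iff] at hznc
    push_neg at hznc
    obtain ⟨W, hWopen, hzW, hWS⟩ := hznc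
    obtain ⟨V, hVopen, hVW⟩ := isOpen_induced_iff.1 hWopen
    have hzV : (z : SeqFull o v) ∈ V := by rw [← hVW] at hzW; exact hzW
    obtain ⟨_, ⟨r, rfl⟩, hzr, hrV⟩ := isBasis.exists_subset_of_mem_open hzV hVopen
    obtain ⟨c, hsc, hrc, -, hcsub⟩ := exists_longer (hzSh : (z : SeqFull o v) ∈ basicOpen s) hzr
    refine ⟨c, hsc, ?_⟩
    rw [Set.eq_empty_iff_forall_notMem]
    rintro p ⟨hpc, hpF⟩
    have hpB : p ∈ B := hFB hpF
    have hpW : (⟨p, hpB⟩ : ↥B) ∈ W := by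
      rw [← hVW]
      exact hrV (hcsub hpc).2
    rw [Set.eq_empty_iff_forall_notMem] at hWS
    exact hWS ⟨p, hpB⟩ ⟨hpW, hpF⟩
  · intro h
    refine ⟨hFB, ?_⟩
    rw [Set.eq_empty_iff_forall_notMem]
    intro z hz
    rw [mem_interior] at hz
    obtain ⟨W, hWsub, hWopen, hzW⟩ := hz
    obtain ⟨V, hVopen, hVW⟩ := isOpen_induced_iff.1 hWopen
    have hzV : (z : SeqFull o v) ∈ V := by rw [← hVW] at hzW; exact hzW
    obtain ⟨_, ⟨r, rfl⟩, hzr, hrV⟩ := isBasis.exists_subset_of_mem_open hzV hVopen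
    obtain ⟨c, hrc, htc, -, hcsub⟩ := exists_longer hzr (z.2 : (z : SeqFull o v) ∈ basicOpen t)
    obtain ⟨s'', hcs'', hs''F⟩ := h c htc
    set w : SeqFull o v := s''.toFull hoo hv with hw
    have hws'' : w ∈ basicOpen s'' := SeqLT.prefixOf_toFull hoo hv s''
    have hwc : w ∈ basicOpen c := basicOpen_mono hcs'' hws''
    have hwB : w ∈ B := (hcsub hwc).2
    have hwW : (⟨w, hwB⟩ : ↥B) ∈ W := by
      rw [← hVW]
      exact hrV (hcsub hwc).1
    have hwcl : (⟨w, hwB⟩ : ↥B) ∈ closure S := hWsub hwW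
    rw [mem_closure_iff] at hwcl
    obtain ⟨p, hp1, hp2⟩ := hwcl (Subtype.val ⁻¹' basicOpen s'')
      (isOpen_basicOpen.preimage continuous_subtype_val) hws''
    rw [Set.eq_empty_iff_forall_notMem] at hs''F
    exact hs''F p ⟨hp1, hp2⟩

end Topology

section ChainSup

variable {o v : Ordinal.{u}}

/-- The supremum of the lengths of a family of sequences indexed by ordinals `< γ`. -/
def chainLen (γ : Ordinal.{u}) (c : Ordinal.{u} → SeqLT o v) : Ordinal.{u} :=
  ⨆ i : γ.ToType, (c ((Ordinal.ToType.mk (o := γ)).symm i).1).len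

theorem le_chainLen {γ : Ordinal.{u}} {c : Ordinal.{u} → SeqLT o v} {α : Ordinal.{u}}
    (h : α < γ) : (c α).len ≤ chainLen γ c := by
  have := le_ciSup (Ordinal.bddAbove_of_small (s :=
    Set.range fun i : γ.ToType => (c ((Ordinal.ToType.mk (o := γ)).symm i).1).len))
    ((Ordinal.ToType.mk (o := γ)) ⟨α, h⟩)
  simpa [chainLen] using this

theorem lt_chainLen_iff {γ : Ordinal.{u}} {c : Ordinal.{u} → SeqLT o v} {β : Ordinal.{u}} :
    β < chainLen γ c ↔ ∃ α, α < γ ∧ β < (c α).len := by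
  rw [chainLen, Ordinal.lt_iSup_iff]
  constructor
  · rintro ⟨i, hi⟩
    exact ⟨((Ordinal.ToType.mk (o := γ)).symm i).1, ((Ordinal.ToType.mk (o := γ)).symm i).2, hi⟩
  · rintro ⟨α, hα, hβ⟩
    exact ⟨(Ordinal.ToType.mk (o := γ)) ⟨α, hα⟩, by simpa using hβ⟩

theorem chainLen_le {γ : Ordinal.{u}} {c : Ordinal.{u} → SeqLT o v} {b : Ordinal.{u}}
    (h : ∀ α, α < γ → (c α).len ≤ b) : chainLen γ c ≤ b :=
  Ordinal.iSup_le fun i => h _ ((Ordinal.ToType.mk (o := γ)).symm i).2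

open Classical in
/-- The union of a chain of sequences. -/
def chainSup (γ : Ordinal.{u}) (c : Ordinal.{u} → SeqLT o v) : SeqLT o v :=
  if h : chainLen γ c < o ⊔ 1 then
    { len := chainLen γ c
      len_lt := h
      val := fun β =>
        if hb : ∃ α, α < γ ∧ β < (c α).len then
          (c (sInf {α | α < γ ∧ β < (c α).len})).val β
        else 0
      val_lt := fun β hβ => by
        obtain ⟨α, hα, hβα⟩ := lt_chainLen_iff.1 hβ
        rw [dif_pos ⟨α, hα, hβα⟩]
        have hmem : sInf {α | α < γ ∧ β < (c α).len} ∈ {α | α < γ ∧ β < (c α).len} :=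
          csInf_mem ⟨α, hα, hβα⟩
        exact (c _).val_lt β hmem.2
      val_zero := fun β hβ => by
        rw [dif_neg]
        rintro ⟨α, hα, hβα⟩
        exact absurd (lt_chainLen_iff.2 ⟨α, hα, hβα⟩) (not_lt.2 hβ) }
  else SeqLT.empty o v

theorem chainSup_len {γ : Ordinal.{u}} {c : Ordinal.{u} → SeqLT o v}
    (h : chainLen γ c < o ⊔ 1) : (chainSup γ c).len = chainLen γ c := by
  rw [chainSup, dif_pos h]

theorem chainSup_val {γ : Ordinal.{u}} {c : Ordinal.{u} → SeqLT o v} {α β : Ordinal.{u}}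
    (h : chainLen γ c < o ⊔ 1) (hα : α < γ) (hβ : β < (c α).len)
    (hmono : ∀ α' β', α' < β' → β' < γ → (c α').le (c β')) :
    (chainSup γ c).val β = (c α).val β := by
  rw [chainSup, dif_pos h]
  dsimp only
  rw [dif_pos ⟨α, hα, hβ⟩]
  have hmem : sInf {α' | α' < γ ∧ β < (c α').len} ∈ {α' | α' < γ ∧ β < (c α').len} :=
    csInf_mem ⟨α, hα, hβ⟩
  have hle : sInf {α' | α' < γ ∧ β < (c α').len} ≤ α := csInf_le' ⟨hα, hβ⟩
  rcases hle.lt_or_eq with h' | h'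
  · exact (hmono _ α h' hα).2 β hmem.2
  · rw [h']

theorem le_chainSup {γ : Ordinal.{u}} {c : Ordinal.{u} → SeqLT o v} {α : Ordinal.{u}}
    (h : chainLen γ c < o ⊔ 1) (hα : α < γ)
    (hmono : ∀ α' β', α' < β' → β' < γ → (c α').le (c β')) :
    (c α).le (chainSup γ c) :=
  ⟨by rw [chainSup_len h]; exact le_chainLen hα,
    fun β hβ => (chainSup_val h hα hβ hmono).symm⟩

theorem isUnionOfChain_chainSup {γ : Ordinal.{u}} {c : Ordinal.{u} → SeqLT o v}
    (h : chainLen γ c < o ⊔ 1)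
    (hmono : ∀ α' β', α' < β' → β' < γ → (c α').le (c β')) :
    IsUnionOfChain (chainSup γ c) γ c :=
  ⟨fun α hα => le_chainSup h hα hmono,
    fun β hβ => lt_chainLen_iff.1 (by rwa [chainSup_len h] at hβ)⟩

theorem isUnionOfChain_len {γ : Ordinal.{u}} {c : Ordinal.{u} → SeqLT o v} {s : SeqLT o v}
    (hs : IsUnionOfChain s γ c) : s.len = chainLen γ c := by
  refine le_antisymm ?_ (chainLen_le fun α hα => (hs.1 α hα).1)
  by_contra hlt
  obtain ⟨α, hα, hβ⟩ := hs.2 (chainLen γ c) (not_le.1 hlt)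
  exact absurd (le_chainLen hα) (not_le.2 hβ)

theorem isUnionOfChain_eq_chainSup {γ : Ordinal.{u}} {c : Ordinal.{u} → SeqLT o v}
    {s : SeqLT o v} (hs : IsUnionOfChain s γ c)
    (hmono : ∀ α' β', α' < β' → β' < γ → (c α').le (c β')) :
    s = chainSup γ c := by
  have hlen : s.len = chainLen γ c := isUnionOfChain_len hs
  have hguard : chainLen γ c < o ⊔ 1 := hlen ▸ s.len_lt
  refine SeqLT.ext' (by rw [chainSup_len hguard, hlen]) (fun β hβ => ?_)
  obtain ⟨α, hα, hβα⟩ := hs.2 β hβ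
  rw [← (hs.1 α hα).2 β hβα, chainSup_val hguard hα hβα hmono]

end ChainSup

section Regular

variable {ν : Cardinal.{u}}

theorem ord_omega_le (hreg : ν.IsRegular) : Ordinal.omega0 ≤ ν.ord := by
  rw [← Cardinal.ord_aleph0]
  exact Cardinal.ord_le_ord.2 hreg.aleph0_le

theorem ord_sup_one (hreg : ν.IsRegular) : ν.ord ⊔ 1 = ν.ord :=
  sup_eq_left.2 (le_trans Ordinal.one_lt_omega0.le (ord_omega_le hreg))

theorem ord_isLimit' (hreg : ν.IsRegular) : Order.IsSuccLimit ν.ord :=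
  Cardinal.isSuccLimit_ord hreg.aleph0_le

theorem ord_succ_lt (hreg : ν.IsRegular) {α : Ordinal.{u}} (h : α < ν.ord) :
    α + 1 < ν.ord := by
  rw [Ordinal.add_one_eq_succ]
  exact (ord_isLimit' hreg).succ_lt h

theorem ord_pos' (hreg : ν.IsRegular) : (0 : Ordinal.{u}) < ν.ord :=
  lt_of_lt_of_le Ordinal.omega0_pos (ord_omega_le hreg) |>.trans_le le_rfl |> fun h => h

theorem ord_one_lt (hreg : ν.IsRegular) : (1 : Ordinal.{u}) < ν.ord :=
  lt_of_lt_of_le Ordinal.one_lt_omega0 (ord_omega_le hreg)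

theorem chainLen_lt (hreg : ν.IsRegular) {γ : Ordinal.{u}} (hγ : γ < ν.ord)
    (c : Ordinal.{u} → SeqLT ν.ord ν.ord) : chainLen γ c < ν.ord := by
  apply Ordinal.iSup_lt_ord
  · rw [Cardinal.mk_toType, hreg.cof_eq]
    exact Cardinal.lt_ord.1 hγ
  · intro i
    exact lt_of_lt_of_eq (c _).len_lt (ord_sup_one hreg)

theorem len_lt_ord (hreg : ν.IsRegular) (s : SeqLT ν.ord ν.ord) : s.len < ν.ord :=
  lt_of_lt_of_eq s.len_lt (ord_sup_one hreg)

/-- There is an enumeration of `ν^{<ν}` in order type `ν`. -/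
theorem exists_enum (hreg : ν.IsRegular) (hpow : Cardinal.powerlt ν ν = ν) :
    ∃ E : Ordinal.{u} → SeqLT ν.ord ν.ord, ∀ s, ∃ β, β < ν.ord ∧ E β = s := by
  classical
  set D := Σ α : ↥(Set.Iio ν.ord), (↥(Set.Iio α.1) → ↥(Set.Iio ν.ord)) with hD
  set g : D → SeqLT ν.ord ν.ord := fun d =>
    { len := d.1.1
      len_lt := lt_of_lt_of_eq d.1.2 (ord_sup_one hreg).symm
      val := fun β => if h : β < d.1.1 then (d.2 ⟨β, h⟩).1 else 0
      val_lt := fun β hβ => by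
        rw [dif_pos hβ]
        exact (d.2 ⟨β, hβ⟩).2
      val_zero := fun β hβ => by
        rw [dif_neg (not_lt.2 hβ)] } with hg
  have hgsurj : Function.Surjective g := by
    intro s
    refine ⟨⟨⟨s.len, len_lt_ord hreg s⟩, fun β => ⟨s.val β.1, s.val_lt β.1 β.2⟩⟩, ?_⟩
    refine SeqLT.ext' rfl (fun β hβ => ?_)
    show (if h : β < s.len then s.val β else 0) = s.val β
    rw [dif_pos hβ]
  have hIio : Cardinal.mk (↥(Set.Iio ν.ord)) = Cardinal.lift.{u + 1} ν := by
    rw [Ordinal.mk_Iio_ordinal, Cardinal.card_ord]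
  have hcard : Cardinal.mk (SeqLT ν.ord ν.ord) ≤ Cardinal.mk (↥(Set.Iio ν.ord)) := by
    refine le_trans (Cardinal.mk_le_of_surjective hgsurj) ?_
    have hDle : Cardinal.mk D ≤ Cardinal.lift.{u + 1} ν * Cardinal.lift.{u + 1} ν := by
      rw [hD, Cardinal.mk_sigma]
      refine le_trans (Cardinal.sum_le_sum _ (fun _ => Cardinal.lift.{u + 1} ν) ?_) ?_
      · intro α
        rw [Cardinal.mk_arrow, Cardinal.lift_id, Cardinal.lift_id, hIio,
          Ordinal.mk_Iio_ordinal, ← Cardinal.lift_power, Cardinal.lift_le]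
        exact le_trans (Cardinal.le_powerlt ν (Cardinal.lt_ord.1 α.2)) (le_of_eq hpow)
      · rw [Cardinal.sum_const', hIio]
    rw [hIio]
    refine le_trans hDle ?_
    rw [← Cardinal.lift_mul, Cardinal.lift_le]
    exact le_of_eq (Cardinal.mul_eq_self hreg.aleph0_le)
  obtain ⟨emb⟩ := Cardinal.le_def _ _ |>.1 hcard
  have : Nonempty (SeqLT ν.ord ν.ord) := ⟨SeqLT.empty ν.ord ν.ord⟩
  have hsurj : Function.Surjective (Function.invFun emb) :=
    Function.invFun_surjective emb.injective
  refine ⟨fun β => if h : β < ν.ord then Function.invFun emb ⟨β, h⟩ else SeqLT.empty ν.ord ν.ord, ?_⟩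
  intro s
  obtain ⟨⟨β, hβ⟩, hE⟩ := hsurj s
  have hβ' : β < ν.ord := hβ
  refine ⟨β, hβ', ?_⟩
  show (if h : β < ν.ord then Function.invFun emb ⟨β, h⟩ else SeqLT.empty ν.ord ν.ord) = s
  rw [dif_pos hβ']
  exact hE

end Regular

section Construct

variable {ν : Cardinal.{u}}

open Classical in
/-- One successor step of the construction: extend `r` to cover `E x` if possible,
then dodge the `β`-th nowhere dense set via `d`, then extend properly. -/
def cstep (E : Ordinal.{u} → SeqLT ν.ord ν.ord)
    (d : Ordinal.{u} → SeqLT ν.ord ν.ord → SeqLT ν.ord ν.ord)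
    (β : Ordinal.{u}) (r : SeqLT ν.ord ν.ord) (x : Ordinal.{u}) : SeqLT ν.ord ν.ord :=
  (d β (if r.le (E x) then E x else r)).snoc 0

/-- The recursively constructed homomorphism, as a function of the intended length. -/
def fAux (t : SeqLT ν.ord ν.ord) (E : Ordinal.{u} → SeqLT ν.ord ν.ord)
    (d : Ordinal.{u} → SeqLT ν.ord ν.ord → SeqLT ν.ord ν.ord) :
    Ordinal.{u} → SeqLT ν.ord ν.ord → SeqLT ν.ord ν.ord := fun α =>
  Ordinal.limitRecOn α (fun _ => t) (fun β ih s => cstep E d β (ih s) (s.val β))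
    (fun γ _ ih s => chainSup γ fun β => if h : β < γ then ih β h s else SeqLT.empty _ _)

variable {t : SeqLT ν.ord ν.ord} {E : Ordinal.{u} → SeqLT ν.ord ν.ord}
  {d : Ordinal.{u} → SeqLT ν.ord ν.ord → SeqLT ν.ord ν.ord}

theorem fAux_zero (s : SeqLT ν.ord ν.ord) : fAux t E d 0 s = t := by
  unfold fAux
  rw [Ordinal.limitRecOn_zero]

theorem fAux_succ (β : Ordinal.{u}) (s : SeqLT ν.ord ν.ord) :
    fAux t E d (Order.succ β) s = cstep E d β (fAux t E d β s) (s.val β) := by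
  unfold fAux
  rw [Ordinal.limitRecOn_succ]

theorem fAux_limit {γ : Ordinal.{u}} (hγ : Order.IsSuccLimit γ) (s : SeqLT ν.ord ν.ord) :
    fAux t E d γ s =
      chainSup γ (fun β => if h : β < γ then fAux t E d β s else SeqLT.empty _ _) := by
  unfold fAux
  rw [Ordinal.limitRecOn_limit _ _ _ _ hγ]

theorem snoc_guard (hreg : ν.IsRegular) (r : SeqLT ν.ord ν.ord) :
    r.len + 1 < ν.ord ⊔ 1 := by
  rw [ord_sup_one hreg]
  exact ord_succ_lt hreg (len_lt_ord hreg r)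

theorem cstep_slt (hreg : ν.IsRegular) (hd_le : ∀ (β : Ordinal.{u}) (r : SeqLT ν.ord ν.ord), r.le (d β r))
    (β : Ordinal.{u}) (r : SeqLT ν.ord ν.ord) (x : Ordinal.{u}) :
    r.slt (cstep E d β r x) := by
  rw [cstep]
  have h0 : (0 : Ordinal.{u}) < ν.ord := Cardinal.lt_ord.2 (by simpa using hreg.pos)
  refine SeqLT.le_slt_trans ?_ (slt_snoc (snoc_guard hreg _) h0)
  by_cases h : r.le (E x)
  · rw [if_pos h]
    exact SeqLT.le_trans h (hd_le β (E x))
  · rw [if_neg h]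
    exact hd_le β r

theorem cstep_E (hreg : ν.IsRegular) (hd_le : ∀ (β : Ordinal.{u}) (r : SeqLT ν.ord ν.ord), r.le (d β r))
    {β : Ordinal.{u}} {r : SeqLT ν.ord ν.ord} {x : Ordinal.{u}} (h : r.le (E x)) :
    (E x).le (cstep E d β r x) := by
  rw [cstep, if_pos h]
  have h0 : (0 : Ordinal.{u}) < ν.ord := Cardinal.lt_ord.2 (by simpa using hreg.pos)
  exact SeqLT.le_trans (hd_le β (E x)) (le_snoc (snoc_guard hreg _) h0)

open Classical in
theorem cstep_subset (hreg : ν.IsRegular) {β : Ordinal.{u}} {r : SeqLT ν.ord ν.ord}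
    {x : Ordinal.{u}} :
    basicOpen (cstep E d β r x) ⊆
      basicOpen (d β (if r.le (E x) then E x else r)) := by
  have h0 : (0 : Ordinal.{u}) < ν.ord := Cardinal.lt_ord.2 (by simpa using hreg.pos)
  exact basicOpen_mono (le_snoc (snoc_guard hreg _) h0)

open Classical in
theorem cstep_arg_le {r : SeqLT ν.ord ν.ord} {x : Ordinal.{u}}
    (h : t.le r) : t.le (if r.le (E x) then E x else r) := by
  by_cases h' : r.le (E x)
  · rw [if_pos h']
    exact SeqLT.le_trans h h'
  · rw [if_neg h']
    exact h

theorem fAux_congr (α : Ordinal.{u}) :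
    ∀ s s' : SeqLT ν.ord ν.ord, (∀ β, β < α → s.val β = s'.val β) →
      fAux t E d α s = fAux t E d α s' := by
  induction α using Ordinal.limitRecOn with
  | zero =>
    intro s s' _
    rw [fAux_zero, fAux_zero]
  | add_one β ih =>
    rw [Ordinal.add_one_eq_succ]
    intro s s' h
    rw [fAux_succ, fAux_succ, ih s s' (fun β' hβ' => h β' (hβ'.trans (Order.lt_succ β))),
      h β (Order.lt_succ β)]
  | limit γ hγ ih =>
    intro s s' h
    rw [fAux_limit hγ, fAux_limit hγ]
    congr 1
    funext β
    by_cases hβ : β < γ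
    · rw [dif_pos hβ, dif_pos hβ, ih β hβ s s' (fun β' hβ' => h β' (hβ'.trans hβ))]
    · rw [dif_neg hβ, dif_neg hβ]

theorem fAux_inv (hreg : ν.IsRegular)
    (hd_le : ∀ (β : Ordinal.{u}) (r : SeqLT ν.ord ν.ord), r.le (d β r)) (α : Ordinal.{u}) :
    α < ν.ord → ∀ s : SeqLT ν.ord ν.ord,
      t.le (fAux t E d α s) ∧ ∀ β, β < α → (fAux t E d β s).slt (fAux t E d α s) := by
  induction α using Ordinal.limitRecOn with
  | zero =>
    intro _ s
    rw [fAux_zero]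
    exact ⟨SeqLT.le_refl t, fun β hβ => absurd hβ ((zero_le : (0 : Ordinal) ≤ β).not_gt)⟩
  | add_one β ih =>
    rw [Ordinal.add_one_eq_succ]
    intro hα s
    have hβν : β < ν.ord := (Order.lt_succ β).trans hα
    have hstep : (fAux t E d β s).slt (fAux t E d (Order.succ β) s) := by
      rw [fAux_succ]
      exact cstep_slt hreg hd_le β _ _
    refine ⟨SeqLT.le_trans ((ih hβν s).1) hstep.1, fun β' hβ' => ?_⟩
    rcases (Order.lt_succ_iff.1 hβ').lt_or_eq with h' | h'
    · exact SeqLT.slt_trans ((ih hβν s).2 β' h') hstep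
    · rw [h']
      exact hstep
  | limit γ hγ ih =>
    intro hγν s
    set c : Ordinal.{u} → SeqLT ν.ord ν.ord :=
      fun β => if h : β < γ then fAux t E d β s else SeqLT.empty _ _ with hc
    have hceq : ∀ β (h : β < γ), c β = fAux t E d β s := fun β h => dif_pos h
    have hmono : ∀ a b, a < b → b < γ → (c a).le (c b) := by
      intro a b hab hbγ
      rw [hceq a (hab.trans hbγ), hceq b hbγ]
      exact ((ih b hbγ (hbγ.trans hγν) s).2 a hab).1
    have hguard : chainLen γ c < ν.ord ⊔ 1 := by
      rw [ord_sup_one hreg]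
      exact chainLen_lt hreg hγν c
    have heq : fAux t E d γ s = chainSup γ c := fAux_limit hγ s
    constructor
    · rw [heq]
      have h0 : (c 0).le (chainSup γ c) := le_chainSup hguard hγ.pos hmono
      rw [hceq 0 hγ.pos, fAux_zero] at h0
      exact h0
    · intro β hβ
      rw [heq]
      have hle : (c β).le (chainSup γ c) := le_chainSup hguard hβ hmono
      rw [hceq β hβ] at hle
      refine ⟨hle, ?_⟩
      rw [chainSup_len hguard]
      have hsucc : Order.succ β < γ := hγ.succ_lt hβ
      have h1 : (fAux t E d β s).len < (fAux t E d (Order.succ β) s).len :=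
        ((ih (Order.succ β) hsucc (hsucc.trans hγν) s).2 β (Order.lt_succ β)).2
      have h2 : (c (Order.succ β)).len ≤ chainLen γ c := le_chainLen hsucc
      rw [hceq _ hsucc] at h2
      exact lt_of_lt_of_le h1 h2

theorem fAux_len_le (hreg : ν.IsRegular)
    (hd_le : ∀ (β : Ordinal.{u}) (r : SeqLT ν.ord ν.ord), r.le (d β r))
    {α α' : Ordinal.{u}} (h : α ≤ α') (hα' : α' < ν.ord) (s : SeqLT ν.ord ν.ord) :
    (fAux t E d α s).le (fAux t E d α' s) := by
  rcases h.lt_or_eq with h' | h'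
  · exact ((fAux_inv hreg hd_le α' hα' s).2 α h').1
  · rw [h']
    exact SeqLT.le_refl _

end Construct

theorem construct_hom {ν : Cardinal.{u}} (hreg : ν.IsRegular)
    (hpow : Cardinal.powerlt ν ν = ν) (t : SeqLT ν.ord ν.ord)
    (F : Ordinal.{u} → Set (SeqFull ν.ord ν.ord))
    (hF : ∀ β, β < ν.ord → ∀ s : SeqLT ν.ord ν.ord, t.le s →
      ∃ s', s.le s' ∧ basicOpen s' ∩ F β = ∅) :
    ∃ f : SeqLT ν.ord ν.ord → SeqLT ν.ord ν.ord,
      IsHom f ∧ IsDenseMap f ∧ IsContinuousMap f ∧ f (SeqLT.empty ν.ord ν.ord) = t ∧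
        ∀ x y, FStarVal f x y → t.prefixOf y ∧ ∀ β, β < ν.ord → y ∉ F β := by
  classical
  obtain ⟨E, hE⟩ := exists_enum hreg hpow
  set d : Ordinal.{u} → SeqLT ν.ord ν.ord → SeqLT ν.ord ν.ord := fun β s =>
    if h : β < ν.ord ∧ t.le s then (hF β h.1 s h.2).choose else s with hd
  have hd_le : ∀ (β : Ordinal.{u}) (r : SeqLT ν.ord ν.ord), r.le (d β r) := by
    intro β r
    rw [hd]
    dsimp only
    split_ifs with h
    · exact (hF β h.1 r h.2).choose_spec.1
    · exact SeqLT.le_refl r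
  have hd_avoid : ∀ (β : Ordinal.{u}) (r : SeqLT ν.ord ν.ord), β < ν.ord → t.le r →
      basicOpen (d β r) ∩ F β = ∅ := by
    intro β r hβ ht
    rw [hd]
    dsimp only
    rw [dif_pos ⟨hβ, ht⟩]
    exact (hF β hβ r ht).choose_spec.2
  set f : SeqLT ν.ord ν.ord → SeqLT ν.ord ν.ord := fun s => fAux t E d s.len s with hf
  have hhom : IsHom f := by
    intro s s' hss'
    have hlen' : s'.len < ν.ord := len_lt_ord hreg s'
    have hcongr : fAux t E d s.len s' = fAux t E d s.len s :=
      fAux_congr s.len s' s (fun β hβ => (hss'.1.2 β hβ).symm)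
    show (fAux t E d s.len s).slt (fAux t E d s'.len s')
    rw [← hcongr]
    exact (fAux_inv hreg hd_le s'.len hlen' s').2 s.len hss'.2
  have hdense : IsDenseMap f := by
    intro s t' hft'
    obtain ⟨x, hx, hEx⟩ := hE t'
    have hguard : s.len + 1 < ν.ord ⊔ 1 := snoc_guard hreg s
    have hlen : (s.snoc x).len = s.len + 1 := snoc_len hguard hx
    refine ⟨x, hx, ?_⟩
    have h1 : fAux t E d s.len (s.snoc x) = fAux t E d s.len s :=
      fAux_congr _ _ _ (fun β hβ => snoc_val_of_lt hguard hx hβ)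
    show t'.le (fAux t E d (s.snoc x).len (s.snoc x))
    rw [hlen, Ordinal.add_one_eq_succ, fAux_succ, snoc_val_last hguard hx, h1, ← hEx]
    exact cstep_E hreg hd_le (by rw [hEx]; exact hft')
  have hslen : ∀ s : SeqLT ν.ord ν.ord, s.len < ν.ord := len_lt_ord hreg
  have hcont : IsContinuousMap f := by
    intro γ hγ hγν s hs u hu
    have hulen : u.len = chainLen γ (fun α => s α) := isUnionOfChain_len hu
    have hlim : Order.IsSuccLimit u.len := by
      rw [Ordinal.isSuccLimit_iff, Order.isSuccPrelimit_iff_succ_lt]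
      constructor
      · have h1γ : 1 < γ := Ordinal.one_lt_of_isSuccLimit hγ
        have h01 : (s 0).slt (s 1) := hs 0 1 zero_lt_one h1γ
        have h0 : 0 < (s 1).len := lt_of_le_of_lt zero_le h01.2
        exact pos_iff_ne_zero.1 (lt_of_lt_of_le h0 ((hu.1 1 h1γ).1))
      · intro a ha
        obtain ⟨α, hαγ, hα⟩ := hu.2 a ha
        have hsucc : Order.succ α < γ := hγ.succ_lt hαγ
        have hlt : (s α).len < (s (Order.succ α)).len :=
          (hs α (Order.succ α) (Order.lt_succ α) hsucc).2
        exact lt_of_le_of_lt (Order.succ_le_of_lt hα)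
          (lt_of_lt_of_le hlt ((hu.1 _ hsucc).1))
    have hufν : u.len < ν.ord := hslen u
    set c : Ordinal.{u} → SeqLT ν.ord ν.ord :=
      fun β => if h : β < u.len then fAux t E d β u else SeqLT.empty _ _ with hc
    have heq : f u = chainSup u.len c := fAux_limit hlim u
    have hguard : chainLen u.len c < ν.ord ⊔ 1 := by
      rw [ord_sup_one hreg]
      exact chainLen_lt hreg hufν c
    have hcmono : ∀ a b, a < b → b < u.len → (c a).le (c b) := by
      intro a b hab hbu
      rw [hc]
      dsimp only
      rw [dif_pos hbu, dif_pos (hab.trans hbu)]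
      exact fAux_len_le hreg hd_le hab.le (hbu.trans hufν) u
    have hfs : ∀ α, α < γ → f (s α) = fAux t E d (s α).len u := by
      intro α hα
      exact fAux_congr _ _ _ (fun β hβ => ((hu.1 α hα).2 β hβ))
    have hslenu : ∀ α, α < γ → (s α).len < u.len := by
      intro α hα
      have hsucc : Order.succ α < γ := hγ.succ_lt hα
      exact lt_of_lt_of_le (hs α (Order.succ α) (Order.lt_succ α) hsucc).2
        ((hu.1 _ hsucc).1)
    constructor
    · intro α hα
      show (f (s α)).le (f u)
      rw [hfs α hα, heq]
      have hle := le_chainSup hguard (hslenu α hα) hcmono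
      have hcv : c (s α).len = fAux t E d (s α).len u := dif_pos (hslenu α hα)
      rwa [hcv] at hle
    · intro β hβ
      rw [heq, chainSup_len hguard] at hβ
      obtain ⟨δ, hδu, hδ⟩ := lt_chainLen_iff.1 hβ
      have hcv : c δ = fAux t E d δ u := dif_pos hδu
      rw [hcv] at hδ
      obtain ⟨α, hαγ, hδα⟩ := hu.2 δ hδu
      refine ⟨α, hαγ, ?_⟩
      show β < (f (s α)).len
      rw [hfs α hαγ]
      exact lt_of_lt_of_le hδ
        (fAux_len_le hreg hd_le hδα.le ((hslenu α hαγ).trans hufν) u).1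
  have hempty : f (SeqLT.empty ν.ord ν.ord) = t := by
    show fAux t E d (SeqLT.empty ν.ord ν.ord).len (SeqLT.empty ν.ord ν.ord) = t
    rw [show (SeqLT.empty ν.ord ν.ord).len = 0 from rfl]
    exact fAux_zero _
  refine ⟨f, hhom, hdense, hcont, hempty, ?_⟩
  intro x y hxy
  constructor
  · have h0 := hxy.1 0 (Cardinal.lt_ord.2 (by simpa using hreg.pos))
    have : f (x.res 0) = t := by rw [SeqFull.res_zero, hempty]
    rwa [this] at h0
  · intro β hβ
    have hβ1 : β + 1 < ν.ord := ord_succ_lt hreg hβ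
    have h1 := hxy.1 (β + 1) hβ1
    have hlen : (x.res (β + 1)).len = β + 1 :=
      SeqFull.res_len (by rw [ord_sup_one hreg]; exact hβ1)
    have hfres : f (x.res (β + 1)) =
        cstep E d β (fAux t E d β (x.res (β + 1))) ((x.res (β + 1)).val β) := by
      show fAux t E d (x.res (β + 1)).len (x.res (β + 1)) = _
      rw [hlen, Ordinal.add_one_eq_succ, fAux_succ]
    rw [hfres] at h1
    intro hyF
    have htle : t.le (fAux t E d β (x.res (β + 1))) := (fAux_inv hreg hd_le β hβ _).1
    have harg := cstep_arg_le (E := E) (x := (x.res (β + 1)).val β) htle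
    have hy1 : y ∈ basicOpen (d β _) := cstep_subset hreg (h1 : _ ∈ basicOpen _)
    have hav := hd_avoid β _ hβ harg
    rw [Set.eq_empty_iff_forall_notMem] at hav
    exact hav y ⟨hy1, hyF⟩

section Reverse

variable {ν : Cardinal.{u}}

/-- Either extend `r` away from `basicOpen w`, or onto an extension of `w`. -/
theorem dodge_basicOpen (hreg : ν.IsRegular) (r w : SeqLT ν.ord ν.ord) :
    ∃ r', r.le r' ∧ (basicOpen r' ∩ basicOpen w = ∅ ∨ w.le r') := by
  by_cases h1 : w.le r
  · exact ⟨r, SeqLT.le_refl r, Or.inr h1⟩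
  by_cases h2 : r.le w
  · -- `r` is a proper prefix of `w`: extend `r` by a value differing from `w`.
    have hlen : r.len < w.len := by
      rcases h2.1.lt_or_eq with h | h
      · exact h
      · exact absurd (SeqLT.ext' h h2.2 ▸ SeqLT.le_refl r) h1
    set β : Ordinal.{u} := if w.val r.len = 0 then 1 else 0 with hβ
    have hβν : β < ν.ord := by
      rw [hβ]
      split_ifs
      · exact ord_one_lt hreg
      · exact (ord_one_lt hreg).trans_le' zero_lt_one.le
    have hβne : β ≠ w.val r.len := by
      rw [hβ]
      split_ifs with h
      · rw [h]; exact one_ne_zero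
      · exact fun h' => h h'.symm
    have hguard : r.len + 1 < ν.ord ⊔ 1 := snoc_guard hreg r
    refine ⟨r.snoc β, le_snoc hguard hβν, Or.inl ?_⟩
    rw [Set.eq_empty_iff_forall_notMem]
    rintro z ⟨hz1, hz2⟩
    have hv1 : z.val r.len = β := by
      rw [← hz1 r.len (by rw [snoc_len hguard hβν]; exact lt_of_lt_of_le (Order.lt_succ r.len) (Ordinal.add_one_eq_succ r.len ▸ le_rfl)), snoc_val_last hguard hβν]
    have hv2 : z.val r.len = w.val r.len := (hz2 r.len hlen).symm
    exact hβne (hv1 ▸ hv2)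
  · -- incomparable: already disjoint.
    refine ⟨r, SeqLT.le_refl r, Or.inl ?_⟩
    rw [Set.eq_empty_iff_forall_notMem]
    rintro z ⟨hz1, hz2⟩
    rcases SeqLT.comparable_of_prefixOf hz1 hz2 with h | h
    · exact h2 h
    · exact h1 h

open Classical in
/-- The union of a `ν`-indexed chain, as a point of the full space. -/
def chainFull (hreg : ν.IsRegular) (c : Ordinal.{u} → SeqLT ν.ord ν.ord) :
    SeqFull ν.ord ν.ord where
  val := fun β =>
    if h : ∃ α, α < ν.ord ∧ β < (c α).len then
      (c (sInf {α | α < ν.ord ∧ β < (c α).len})).val β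
    else 0
  val_lt := fun β _ => by
    split_ifs with h
    · have hmem := csInf_mem (s := {α | α < ν.ord ∧ β < (c α).len}) h
      exact (c _).val_lt β hmem.2
    · exact Cardinal.lt_ord.2 (by simpa using hreg.pos)
  val_zero := fun β hβ => by
    rw [dif_neg]
    rintro ⟨α, hα, hβα⟩
    exact absurd (lt_of_lt_of_le (len_lt_ord hreg (c α)) hβ) (not_lt.2 hβα.le)

open Classical in
theorem chainFull_prefixOf (hreg : ν.IsRegular) {c : Ordinal.{u} → SeqLT ν.ord ν.ord}
    (hmono : ∀ a b, a < b → b < ν.ord → (c a).le (c b)) {α : Ordinal.{u}}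
    (hα : α < ν.ord) : (c α).prefixOf (chainFull hreg c) := by
  intro β hβ
  show (c α).val β = if h : _ then _ else _
  rw [dif_pos ⟨α, hα, hβ⟩]
  have hmem := csInf_mem (s := {α' | α' < ν.ord ∧ β < (c α').len}) ⟨α, hα, hβ⟩
  have hle : sInf {α' | α' < ν.ord ∧ β < (c α').len} ≤ α := csInf_le' ⟨hα, hβ⟩
  rcases hle.lt_or_eq with h' | h'
  · exact ((hmono _ α h' hα).2 β hmem.2).symm
  · rw [h']

theorem le_len_of_strict (hreg : ν.IsRegular) {c : Ordinal.{u} → SeqLT ν.ord ν.ord}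
    (hmono : ∀ a b, a < b → b < ν.ord → (c a).slt (c b)) :
    ∀ α, α < ν.ord → α ≤ (c α).len := by
  intro α
  induction α using Ordinal.induction with
  | h α ih =>
    intro hα
    by_contra h
    push_neg at h
    have h1 := ih (c α).len h ((len_lt_ord hreg (c α)).trans_le le_rfl |> fun _ => (len_lt_ord hreg (c α)))
    have h2 : (c (c α).len).slt (c α) := hmono _ α h hα
    exact absurd (lt_of_le_of_lt h1 h2.2) (lt_irrefl _)

open Classical in
/-- The chain of positions built while following the point `y` through the tree. -/
def buildP (f : SeqLT ν.ord ν.ord → SeqLT ν.ord ν.ord) (y : SeqFull ν.ord ν.ord)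
    (hν : ν.IsRegular) : Ordinal.{u} → SeqLT ν.ord ν.ord := fun α =>
  Ordinal.limitRecOn α (SeqLT.empty _ _)
    (fun _ ih =>
      if h : ∃ β, β < ν.ord ∧ y ∈ basicOpen (f (ih.snoc β)) then ih.snoc h.choose else ih)
    (fun γ _ ih => chainSup γ (fun β => if h : β < γ then ih β h else SeqLT.empty _ _))

theorem buildP_zero {f : SeqLT ν.ord ν.ord → SeqLT ν.ord ν.ord} {y : SeqFull ν.ord ν.ord}
    {hν : ν.IsRegular} : buildP f y hν 0 = SeqLT.empty _ _ := by
  unfold buildP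
  rw [Ordinal.limitRecOn_zero]

open Classical in
theorem buildP_succ {f : SeqLT ν.ord ν.ord → SeqLT ν.ord ν.ord} {y : SeqFull ν.ord ν.ord}
    {hν : ν.IsRegular} (α : Ordinal.{u}) :
    buildP f y hν (Order.succ α) =
      (if h : ∃ β, β < ν.ord ∧ y ∈ basicOpen (f ((buildP f y hν α).snoc β)) then
        (buildP f y hν α).snoc h.choose else buildP f y hν α) := by
  unfold buildP
  rw [Ordinal.limitRecOn_succ]

theorem buildP_limit {f : SeqLT ν.ord ν.ord → SeqLT ν.ord ν.ord} {y : SeqFull ν.ord ν.ord}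
    {hν : ν.IsRegular} {γ : Ordinal.{u}} (hγ : Order.IsSuccLimit γ) :
    buildP f y hν γ =
      chainSup γ (fun β => if h : β < γ then buildP f y hν β else SeqLT.empty _ _) := by
  unfold buildP
  rw [Ordinal.limitRecOn_limit _ _ _ _ hγ]

theorem reverse_meager (hreg : ν.IsRegular) (hpow : Cardinal.powerlt ν ν = ν)
    (t : SeqLT ν.ord ν.ord) (A : Set (SeqFull ν.ord ν.ord))
    (f : SeqLT ν.ord ν.ord → SeqLT ν.ord ν.ord)
    (hhom : IsHom f) (hdense : IsDenseMap f) (hcont : IsContinuousMap f)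
    (hfe : f (SeqLT.empty ν.ord ν.ord) = t)
    (hran : ∀ x y, FStarVal f x y → y ∈ A) :
    MeagerIn (basicOpen t \ A) (basicOpen t) := by
  classical
  have hoo := ord_sup_one hreg
  have hv0 : (0 : Ordinal.{u}) < ν.ord := Cardinal.lt_ord.2 (by simpa using hreg.pos)
  set B := basicOpen t with hB
  set U : SeqLT ν.ord ν.ord → Set (SeqFull ν.ord ν.ord) := fun s =>
    ⋃ (β : Ordinal.{u}), ⋃ (_ : β < ν.ord), basicOpen (f (s.snoc β)) with hU
  set G : SeqLT ν.ord ν.ord → Set (SeqFull ν.ord ν.ord) := fun s =>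
    ((B \ A) ∩ basicOpen (f s)) \ U s with hG
  obtain ⟨E, hE⟩ := exists_enum hreg hpow
  have hGB : ∀ s, G s ⊆ B := fun s z hz => hz.1.1.1
  have hGnwd : ∀ s, NowhereDenseIn (G s) B := by
    intro s
    rw [hB, nowhereDenseIn_iff hoo hv0 (hGB s)]
    intro r htr
    obtain ⟨r', hrr', hd⟩ := dodge_basicOpen hreg r (f s)
    rcases hd with hdisj | hle
    · refine ⟨r', hrr', ?_⟩
      rw [Set.eq_empty_iff_forall_notMem]
      rintro z ⟨hz1, hz2⟩
      rw [Set.eq_empty_iff_forall_notMem] at hdisj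
      exact hdisj z ⟨hz1, hz2.1.2⟩
    · obtain ⟨β, hβ, hβle⟩ := hdense s r' hle
      refine ⟨f (s.snoc β), SeqLT.le_trans hrr' hβle, ?_⟩
      rw [Set.eq_empty_iff_forall_notMem]
      rintro z ⟨hz1, hz2⟩
      exact hz2.2 (Set.mem_iUnion₂.2 ⟨β, hβ, hz1⟩)
  refine ⟨fun i => G (E i.1), fun i => hGnwd _, ?_⟩
  have hBA_inter : (B \ A) ∩ B = B \ A := Set.inter_eq_left.2 Set.diff_subset
  rw [hBA_inter]
  apply Set.Subset.antisymm
  · intro y hy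
    by_contra hyG'
    have hyG : ∀ s, y ∉ G s := by
      intro s hs
      obtain ⟨β, hβ, hEβ⟩ := hE s
      refine hyG' (Set.mem_iUnion.2 ⟨⟨β, hβ⟩, ?_⟩)
      show y ∈ G (E β)
      rwa [hEβ]
    set p := buildP f y hreg with hp
    have hQ : ∀ α, α < ν.ord →
        (∀ β, β < α → (p β).slt (p α)) ∧ y ∈ basicOpen (f (p α)) := by
      intro α
      induction α using Ordinal.limitRecOn with
      | zero =>
        intro _
        refine ⟨fun β hβ => absurd hβ ((zero_le : (0 : Ordinal) ≤ β).not_gt), ?_⟩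
        rw [show p 0 = SeqLT.empty ν.ord ν.ord from buildP_zero, hfe]
        exact hy.1
      | add_one α ih =>
        rw [Ordinal.add_one_eq_succ]
        intro hα
        have hαν : α < ν.ord := (Order.lt_succ α).trans hα
        obtain ⟨hchain, hmem⟩ := ih hαν
        have hyU : y ∈ U (p α) := by
          by_contra hnU
          exact hyG (p α) ⟨⟨hy, hmem⟩, hnU⟩
        have hex : ∃ β, β < ν.ord ∧ y ∈ basicOpen (f ((p α).snoc β)) := by
          obtain ⟨β, hβ, hmemβ⟩ := Set.mem_iUnion₂.1 hyU
          exact ⟨β, hβ, hmemβ⟩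
        have hpsucc : p (Order.succ α) =
            if h : ∃ β, β < ν.ord ∧ y ∈ basicOpen (f ((p α).snoc β)) then
              (p α).snoc h.choose else p α := buildP_succ α
        rw [dif_pos hex] at hpsucc
        have hslt : (p α).slt (p (Order.succ α)) := by
          rw [hpsucc]
          exact slt_snoc (snoc_guard hreg _) hex.choose_spec.1
        constructor
        · intro β hβ
          rcases (Order.lt_succ_iff.1 hβ).lt_or_eq with h' | h'
          · exact SeqLT.slt_trans (hchain β h') hslt
          · rw [h']
            exact hslt
        · rw [hpsucc]
          exact hex.choose_spec.2
      | limit γ hγ ih =>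
        intro hγν
        have hceq : ∀ β (h : β < γ),
            (fun β => if h : β < γ then p β else SeqLT.empty ν.ord ν.ord) β = p β :=
          fun β h => dif_pos h
        set c : Ordinal.{u} → SeqLT ν.ord ν.ord :=
          fun β => if h : β < γ then p β else SeqLT.empty ν.ord ν.ord with hc
        have heq : p γ = chainSup γ c := buildP_limit hγ
        have hguard : chainLen γ c < ν.ord ⊔ 1 := by
          rw [hoo]
          exact chainLen_lt hreg hγν c
        have hcstrict : ∀ a b, a < b → b < γ → (c a).slt (c b) := by
          intro a b hab hbγ
          have h1 : c a = p a := dif_pos (hab.trans hbγ)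
          have h2 : c b = p b := dif_pos hbγ
          rw [h1, h2]
          exact (ih b hbγ (hbγ.trans hγν)).1 a hab
        have hcmono : ∀ a b, a < b → b < γ → (c a).le (c b) :=
          fun a b hab hbγ => (hcstrict a b hab hbγ).1
        have hUC : IsUnionOfChain (p γ) γ c := by
          rw [heq]
          exact isUnionOfChain_chainSup hguard hcmono
        constructor
        · intro β hβ
          have h2 : c β = p β := dif_pos hβ
          refine ⟨h2 ▸ hUC.1 β hβ, ?_⟩
          have hsucc : Order.succ β < γ := hγ.succ_lt hβ
          have hlt : (p β).len < (p (Order.succ β)).len :=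
            ((ih (Order.succ β) hsucc (hsucc.trans hγν)).1 β (Order.lt_succ β)).2
          have h3 : (c (Order.succ β)).len ≤ chainLen γ c := le_chainLen hsucc
          rw [show c (Order.succ β) = p (Order.succ β) from dif_pos hsucc] at h3
          rw [heq, chainSup_len hguard]
          exact lt_of_lt_of_le hlt h3
        · have hUCf := hcont γ hγ hγν c hcstrict (p γ) hUC
          show (f (p γ)).prefixOf y
          intro β' hβ'
          obtain ⟨δ, hδγ, hβ'δ⟩ := hUCf.2 β' hβ'
          have h1 := (hUCf.1 δ hδγ).2 β' hβ'δ
          have h2 : (f (c δ)).prefixOf y := by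
            rw [show c δ = p δ from dif_pos hδγ]
            exact (ih δ hδγ (hδγ.trans hγν)).2
          rw [← h1]
          exact h2 β' hβ'δ
    have hpmono : ∀ a b, a < b → b < ν.ord → (p a).slt (p b) :=
      fun a b hab hb => (hQ b hb).1 a hab
    set x := chainFull hreg p with hx
    have hpre : ∀ α, α < ν.ord → (p α).prefixOf x :=
      fun α hα => chainFull_prefixOf hreg (fun a b hab hb => (hpmono a b hab hb).1) hα
    have hflen : ∀ α, α < ν.ord → α ≤ (f (p α)).len :=
      le_len_of_strict hreg (fun a b hab hb => hhom _ _ (hpmono a b hab hb))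
    have hplen : ∀ α, α < ν.ord → α ≤ (p α).len := le_len_of_strict hreg hpmono
    have hfst : FStarVal f x y := by
      constructor
      · intro α hα
        have hres : (x.res α).prefixOf x := SeqFull.res_prefixOf (by rw [hoo]; exact hα)
        have hreslen : (x.res α).len = α := SeqFull.res_len (by rw [hoo]; exact hα)
        have hcomp : (x.res α).le (p α) := by
          rcases SeqLT.comparable_of_prefixOf hres (hpre α hα) with h | h
          · exact h
          · have h1 : (p α).len ≤ α := le_trans h.1 (le_of_eq hreslen)
            have h2 : p α = x.res α :=
              eq_of_prefixOf_len_eq (hpre α hα) hres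
                (le_antisymm h1 (hplen α hα) |>.trans hreslen.symm)
            rw [← h2]
            exact SeqLT.le_refl _
        have hfle : (f (x.res α)).le (f (p α)) := by
          rcases hcomp.1.lt_or_eq with h' | h'
          · exact (hhom _ _ ⟨hcomp, h'⟩).1
          · rw [SeqLT.ext' h' hcomp.2]
            exact SeqLT.le_refl _
        exact SeqLT.prefixOf_of_le hfle (hQ α hα).2
      · intro β hβ
        have hβ1 : β + 1 < ν.ord := ord_succ_lt hreg hβ
        have hαν : (p (β + 1)).len < ν.ord := len_lt_ord hreg _
        have hres : x.res (p (β + 1)).len = p (β + 1) :=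
          SeqFull.prefixOf_iff_res.1 (hpre (β + 1) hβ1)
        refine ⟨(p (β + 1)).len, hαν, ?_⟩
        rw [hres]
        have h1 := hflen (β + 1) hβ1
        refine lt_of_lt_of_le ?_ h1
        rw [Ordinal.add_one_eq_succ]
        exact Order.lt_succ β
    exact hy.2 (hran x y hfst)
  · intro y hy
    obtain ⟨i, hi⟩ := Set.mem_iUnion.1 hy
    exact hi.1.1

end Reverse

/-- Solovay-style characterization of comeagerness: for an infinite regular cardinal `ν` with
`ν^{<ν} = ν`, a set `A ⊆ ν^ν` is `ν`-comeager in `N_t` iff there is a dense continuous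
homomorphism `f : ν^{<ν} → ν^{<ν}` with `f ∅ = t` whose induced map `f*` has range inside `A`. -/
theorem statement4 (ν : Cardinal.{u}) (hreg : ν.IsRegular)
    (hpow : Cardinal.powerlt ν ν = ν)
    (t : SeqLT ν.ord ν.ord) (A : Set (SeqFull ν.ord ν.ord)) :
    ComeagerIn A (basicOpen t) ↔
      ∃ f : SeqLT ν.ord ν.ord → SeqLT ν.ord ν.ord,
        IsHom f ∧ IsDenseMap f ∧ IsContinuousMap f ∧
          f (SeqLT.empty ν.ord ν.ord) = t ∧ ∀ x y, FStarVal f x y → y ∈ A := by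
  classical
  have hoo := ord_sup_one hreg
  have hv0 : (0 : Ordinal.{u}) < ν.ord := Cardinal.lt_ord.2 (by simpa using hreg.pos)
  constructor
  · rintro ⟨F, hnwd, hunion⟩
    set F' : Ordinal.{u} → Set (SeqFull ν.ord ν.ord) :=
      fun β => if h : β < ν.ord then F ⟨β, h⟩ else ∅ with hF'
    have hFprop : ∀ β, β < ν.ord → ∀ s : SeqLT ν.ord ν.ord, t.le s →
        ∃ s', s.le s' ∧ basicOpen s' ∩ F' β = ∅ := by
      intro β hβ s hs
      obtain ⟨s', hss', hdis⟩ :=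
        (nowhereDenseIn_iff hoo hv0 (hnwd ⟨β, hβ⟩).1).1 (hnwd ⟨β, hβ⟩) s hs
      refine ⟨s', hss', ?_⟩
      have h2 : F' β = F ⟨β, hβ⟩ := dif_pos hβ
      rw [h2]
      exact hdis
    obtain ⟨f, hhom, hdense, hcont, hfe, hfs⟩ := construct_hom hreg hpow t F' hFprop
    refine ⟨f, hhom, hdense, hcont, hfe, ?_⟩
    intro x y hxy
    obtain ⟨hty, hav⟩ := hfs x y hxy
    by_contra hyA
    have hyBA : y ∈ (basicOpen t \ A) ∩ basicOpen t := ⟨⟨hty, hyA⟩, hty⟩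
    rw [hunion] at hyBA
    obtain ⟨i, hi⟩ := Set.mem_iUnion.1 hyBA
    have hmem : y ∈ F' i.1 := by
      have h2 : F' i.1 = F ⟨i.1, i.2⟩ := dif_pos i.2
      rw [h2]
      exact hi
    exact hav i.1 i.2 hmem
  · rintro ⟨f, hhom, hdense, hcont, hfe, hran⟩
    exact reverse_meager hreg hpow t A f hhom hdense hcont hfe hran

end
end
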